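/- Let p > 1 be a real number and d ≥ 1 an integer, and let a = ((1/d + 1)^p + (d−1)(1/d)^p − 1)^{1/p}. In ℝ^{d+1}, let v_D = −a·e_{d+1} and c_2 = a·e_{d+1}, where e_{d+1} is the (d+1)-th standard basis vector. Then ||c_2 − v_D||_p = 2a, and for every x ∈ ℝ^{d+1} with ||x||_p ≤ d^{(1−p)/p}, it holds that ||x − v_D||_p ≤ a + d^{(1−p)/p} < 2a = ||c_2 − v_D||_p. -/

import Mathlib

lemma strict_superadd (p x y : ℝ) (hp : 1 < p) (hx : 0 < x) (hy : 0 < y) :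
    x ^ p + y ^ p < (x + y) ^ p := by
  have hps : 0 < p - 1 := by linarith
  have hxy : 0 < x + y := by linarith
  have split_pow : ∀ z : ℝ, 0 < z → z ^ p = z * z ^ (p - 1) := by
    intro z hz
    have : z ^ p = z ^ ((1 : ℝ) + (p - 1)) := by norm_num
    rw [this, Real.rpow_add hz, Real.rpow_one]
  have h1 := split_pow x hx
  have h2 := split_pow y hy
  have h3 := split_pow (x + y) hxy
  have hx' : x ^ (p - 1) < (x + y) ^ (p - 1) :=
    Real.rpow_lt_rpow hx.le (by linarith) hps
  have hy' : y ^ (p - 1) < (x + y) ^ (p - 1) :=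
    Real.rpow_lt_rpow hy.le (by linarith) hps
  calc x ^ p + y ^ p = x * x ^ (p - 1) + y * y ^ (p - 1) := by rw [h1, h2]
    _ < x * (x + y) ^ (p - 1) + y * (x + y) ^ (p - 1) := by
        gcongr
    _ = (x + y) * (x + y) ^ (p - 1) := by ring
    _ = (x + y) ^ p := h3.symm

/-- Dummy-voter gadget for the 3-SAT reduction under the `l_p` norm. -/
theorem stmt_16 (p : ℝ) (hp : 1 < p) (d : ℕ) (hd : 1 ≤ d) :
    let a : ℝ :=
      ((1 / (d : ℝ) + 1) ^ p + ((d : ℝ) - 1) * (1 / (d : ℝ)) ^ p - 1) ^ ((1 : ℝ) / p)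
    let vD : Fin (d + 1) → ℝ := fun j => if (j : ℕ) = d then -a else 0
    let c₂ : Fin (d + 1) → ℝ := fun j => if (j : ℕ) = d then a else 0
    (∑ i : Fin (d + 1), |c₂ i - vD i| ^ p) ^ ((1 : ℝ) / p) = 2 * a ∧
    ∀ x : Fin (d + 1) → ℝ,
      (∑ i : Fin (d + 1), |x i| ^ p) ^ ((1 : ℝ) / p) ≤ (d : ℝ) ^ ((1 - p) / p) →
      (∑ i : Fin (d + 1), |x i - vD i| ^ p) ^ ((1 : ℝ) / p)
          ≤ a + (d : ℝ) ^ ((1 - p) / p) ∧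
        a + (d : ℝ) ^ ((1 - p) / p) < 2 * a := by
  intro a vD c₂
  have hp0 : (0 : ℝ) < p := by linarith
  have hd0 : (0 : ℝ) < (d : ℝ) := by exact_mod_cast hd
  set t : ℝ := 1 / (d : ℝ) with ht
  have ht0 : 0 < t := by positivity
  set B : ℝ := (t + 1) ^ p + ((d : ℝ) - 1) * t ^ p - 1 with hB
  -- strict superadditivity
  have hkey : t ^ p + 1 < (t + 1) ^ p := by
    have := strict_superadd p t 1 hp ht0 one_pos
    simpa using this
  -- d^(1-p) = d * t^p
  have hdt : (d : ℝ) ^ (1 - p) = (d : ℝ) * t ^ p := by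
    rw [Real.rpow_sub hd0, Real.rpow_one, ht, one_div, Real.inv_rpow hd0.le]
    field_simp
  have hBgt : (d : ℝ) ^ (1 - p) < B := by
    rw [hdt, hB]
    have h1 : 0 < t ^ p := Real.rpow_pos_of_pos ht0 p
    nlinarith [hkey]
  have hdpow_pos : (0 : ℝ) < (d : ℝ) ^ (1 - p) := Real.rpow_pos_of_pos hd0 _
  have hB0 : 0 < B := lt_trans hdpow_pos hBgt
  have ha : a = B ^ ((1 : ℝ) / p) := rfl
  have ha0 : 0 < a := by rw [ha]; exact Real.rpow_pos_of_pos hB0 _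
  -- a > d^((1-p)/p)
  have hD : (d : ℝ) ^ ((1 - p) / p) = ((d : ℝ) ^ (1 - p)) ^ ((1 : ℝ) / p) := by
    rw [← Real.rpow_mul hd0.le]
    ring_nf
  have haD : (d : ℝ) ^ ((1 - p) / p) < a := by
    rw [hD, ha]
    exact Real.rpow_lt_rpow hdpow_pos.le hBgt (by positivity)
  -- helper: sum of the delta function
  have hsum : ∀ c : ℝ, (∑ i : Fin (d + 1), |(if (i : ℕ) = d then c else 0)| ^ p)
      = |c| ^ p := by
    intro c
    rw [Finset.sum_eq_single (⟨d, Nat.lt_succ_self d⟩ : Fin (d + 1))]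
    · simp
    · intro b _ hb
      have : (b : ℕ) ≠ d := by
        intro h; apply hb; exact Fin.ext h
      simp [this, Real.zero_rpow (ne_of_gt hp0)]
    · intro h; exact absurd (Finset.mem_univ _) h
  have habs : ∀ c : ℝ, 0 ≤ c → (|c| ^ p) ^ ((1 : ℝ) / p) = c := by
    intro c hc
    rw [abs_of_nonneg hc, one_div, Real.rpow_rpow_inv hc (ne_of_gt hp0)]
  constructor
  · have : (∑ i : Fin (d + 1), |c₂ i - vD i| ^ p)
        = ∑ i : Fin (d + 1), |(if (i : ℕ) = d then 2 * a else 0)| ^ p := by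
      apply Finset.sum_congr rfl
      intro i _
      simp only [c₂, vD]
      split <;> norm_num <;> ring_nf <;> simp [abs_mul]
    rw [this, hsum, habs _ (by linarith)]
  · intro x hx
    constructor
    · -- Minkowski
      have hmk := Real.Lp_add_le (Finset.univ : Finset (Fin (d + 1))) x
        (fun i => -vD i) hp.le
      have hxv : ∀ i : Fin (d + 1), x i - vD i = x i + -vD i := fun i => by ring
      have hvsum : (∑ i : Fin (d + 1), |-vD i| ^ p) ^ ((1 : ℝ) / p) = a := by
        have : (∑ i : Fin (d + 1), |-vD i| ^ p)
            = ∑ i : Fin (d + 1), |(if (i : ℕ) = d then a else 0)| ^ p := by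
          apply Finset.sum_congr rfl
          intro i _
          simp only [vD]
          split <;> simp [abs_neg]
        rw [this, hsum, habs _ ha0.le]
      calc (∑ i : Fin (d + 1), |x i - vD i| ^ p) ^ ((1 : ℝ) / p)
          = (∑ i : Fin (d + 1), |x i + -vD i| ^ p) ^ ((1 : ℝ) / p) := by
            simp only [hxv]
        _ ≤ (∑ i : Fin (d + 1), |x i| ^ p) ^ ((1 : ℝ) / p)
            + (∑ i : Fin (d + 1), |-vD i| ^ p) ^ ((1 : ℝ) / p) := hmk
        _ ≤ (d : ℝ) ^ ((1 - p) / p) + a := by rw [hvsum]; exact add_le_add_left hx _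
        _ = a + (d : ℝ) ^ ((1 - p) / p) := by ring
    · linarith
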